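/- Let G be a locally compact group endowed with a left Haar measure, c ≥ 1, let π be a representation of G on a complex Hilbert space H which is a group homomorphism into the invertible bounded operators, continuous for the strong operator topology, with ‖π(s)‖ ≤ c for all s ∈ G, and let ξ, η ∈ H. Let K be the closed linear span of the set of Bochner integrals {∫_G f(s) π(s)ξ ds : f ∈ L¹(G)}. Then: (1) K is invariant under π(t) for every t ∈ G; (2) ξ ∈ K; and (3) for every t ∈ G, ⟨π(t)ξ, η⟩ = ⟨π(t)ξ, Pη⟩, where P is the orthogonal projection of H onto K. In particular, the coefficient φ(t) = ⟨π(t)ξ, η⟩ is a coefficient of the restriction of π to K, with ‖Pη‖ ≤ ‖η‖. -/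

import Mathlib

open scoped ENNReal
open MeasureTheory

structure HilbRep (G : Type*) [Group G] [TopologicalSpace G] where
  (space : Type*)
  [normedAddCommGroup : NormedAddCommGroup space]
  [innerProductSpace : InnerProductSpace ℂ space]
  [completeSpace : CompleteSpace space]
  toFun : G →* (space →L[ℂ] space)ˣ

attribute [instance] HilbRep.normedAddCommGroup HilbRep.innerProductSpace HilbRep.completeSpace

namespace HilbRep

variable {G : Type*} [Group G] [TopologicalSpace G]

/-- The bounded invertible operator associated to a group element. -/
def op (π : HilbRep G) (s : G) : π.space →L[ℂ] π.space :=
  (π.toFun s : π.space →L[ℂ] π.space)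

/-- The representation is uniformly bounded by `c`. -/
def IsUB (π : HilbRep G) (c : ℝ) : Prop := ∀ s : G, ‖π.op s‖ ≤ c

/-- The representation is continuous for the strong operator topology. -/
def IsSOTContinuous (π : HilbRep G) : Prop :=
  ∀ ξ : π.space, Continuous fun s : G => π.op s ξ

/-- `π ∈ R_c(G)`: strongly continuous and uniformly bounded by `c`. -/
def IsRc (π : HilbRep G) (c : ℝ) : Prop := π.IsUB c ∧ π.IsSOTContinuous

/-- `π` almost has invariant vectors. -/
def AlmostInvariantVectors (π : HilbRep G) : Prop :=
  ∀ Q : Set G, IsCompact Q → ∀ ε : ℝ, 0 < ε →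
    ∃ ξ : π.space, ∀ s ∈ Q, ‖π.op s ξ - ξ‖ < ε * ‖ξ‖

/-- `π` has a nonzero invariant vector. -/
def HasInvariantVector (π : HilbRep G) : Prop :=
  ∃ ξ : π.space, ξ ≠ 0 ∧ ∀ s : G, π.op s ξ = ξ

end HilbRep

universe u v

/-- Property (T)_c. -/
def HasPropertyT (G : Type u) [Group G] [TopologicalSpace G] (c : ℝ) : Prop :=
  ∀ π : HilbRep.{u, v} G, π.IsRc c → π.AlmostInvariantVectors → π.HasInvariantVector

/-- The closed linear span of the Bochner integrals `∫ f(s) π(s)ξ ds`, `f ∈ L¹(G)`. -/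
noncomputable def cyclicSubspace {G : Type u} [Group G] [TopologicalSpace G]
    [MeasurableSpace G] (μ : Measure G) (π : HilbRep.{u, v} G) (ξ : π.space) :
    Submodule ℂ π.space :=
  (Submodule.span ℂ {x : π.space | ∃ f : G → ℂ, Integrable f μ ∧
    x = ∫ s, f s • π.op s ξ ∂μ}).topologicalClosure

instance cyclicSubspace.instCompleteSpace {G : Type u} [Group G] [TopologicalSpace G]
    [MeasurableSpace G] (μ : Measure G) (π : HilbRep.{u, v} G) (ξ : π.space) :
    CompleteSpace (cyclicSubspace μ π ξ) :=
  (Submodule.isClosed_topologicalClosure _).completeSpace_coe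

section Aux

variable {G : Type*} [Group G] [TopologicalSpace G]

lemma HilbRep.op_mul (π : HilbRep G) (t s : G) :
    π.op (t * s) = (π.op t).comp (π.op s) := by
  ext x
  simp [HilbRep.op, map_mul]

lemma HilbRep.op_one (π : HilbRep G) : π.op (1 : G) = ContinuousLinearMap.id ℂ π.space := by
  ext x
  simp [HilbRep.op]

end Aux

theorem cyclic_subspace_invariant_mem_and_projection {G : Type u} [Group G] [TopologicalSpace G]
    [IsTopologicalGroup G] [LocallyCompactSpace G] [MeasurableSpace G] [BorelSpace G]
    (μ : Measure G) [μ.IsHaarMeasure] (c : ℝ) (hc : 1 ≤ c)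
    (π : HilbRep.{u, v} G) (hπ : π.IsRc c) (ξ η : π.space) :
    (∀ t : G, ∀ x ∈ cyclicSubspace μ π ξ, π.op t x ∈ cyclicSubspace μ π ξ) ∧
      ξ ∈ cyclicSubspace μ π ξ ∧
      (∀ t : G, (inner ℂ (π.op t ξ) η : ℂ) =
        inner ℂ (π.op t ξ) (((cyclicSubspace μ π ξ).orthogonalProjectionOnto η : cyclicSubspace μ π ξ) : π.space)) ∧
      ‖(((cyclicSubspace μ π ξ).orthogonalProjectionOnto η : cyclicSubspace μ π ξ) : π.space)‖ ≤ ‖η‖ := by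
  classical
  set S : Set π.space := {x : π.space | ∃ f : G → ℂ, Integrable f μ ∧
    x = ∫ s, f s • π.op s ξ ∂μ} with hS
  -- Part 1: invariance
  have hgen : ∀ t : G, ∀ x ∈ S, π.op t x ∈ S := by
    intro t x hx
    obtain ⟨f, hf, rfl⟩ := hx
    by_cases hint : Integrable (fun s => f s • π.op s ξ) μ
    · set g : G → π.space := fun u => f u • π.op (t * u) ξ with hg
      have hgeq : g = fun u => π.op t (f u • π.op u ξ) := by
        funext u
        show f u • π.op (t * u) ξ = π.op t (f u • π.op u ξ)
        rw [_root_.map_smul, HilbRep.op_mul]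
        rfl
      have hgint : Integrable g μ := by
        rw [hgeq]; exact (π.op t).integrable_comp hint
      have hftr : Integrable (fun s => f (t⁻¹ * s)) μ := by
        have := ((measurePreserving_mul_left μ t⁻¹).integrable_comp_emb
          (Homeomorph.mulLeft t⁻¹).measurableEmbedding (g := f)).2 hf
        exact this
      refine ⟨fun s => f (t⁻¹ * s), hftr, ?_⟩
      calc π.op t (∫ s, f s • π.op s ξ ∂μ)
          = ∫ s, π.op t (f s • π.op s ξ) ∂μ :=
            (ContinuousLinearMap.integral_comp_comm _ hint).symm
        _ = ∫ s, g s ∂μ := by rw [hgeq]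
        _ = ∫ s, g (t⁻¹ * s) ∂μ :=
            ((measurePreserving_mul_left μ t⁻¹).integral_comp
              (Homeomorph.mulLeft t⁻¹).measurableEmbedding g).symm
        _ = ∫ s, f (t⁻¹ * s) • π.op s ξ ∂μ := by
            congr 1
            funext s
            rw [hg]
            simp [mul_inv_cancel_left]
    · refine ⟨0, integrable_zero _ _ _, ?_⟩
      rw [integral_undef hint]
      simp
  have hinv : ∀ t : G, ∀ x ∈ cyclicSubspace μ π ξ, π.op t x ∈ cyclicSubspace μ π ξ := by
    intro t x hx
    have hspan : ∀ y ∈ Submodule.span ℂ S, π.op t y ∈ Submodule.span ℂ S := by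
      intro y hy
      have : Submodule.map ((π.op t) : π.space →ₗ[ℂ] π.space) (Submodule.span ℂ S)
          ≤ Submodule.span ℂ S := by
        rw [Submodule.map_span]
        exact Submodule.span_mono (Set.image_subset_iff.2 fun z hz => hgen t z hz)
      exact this ⟨y, hy, rfl⟩
    have hx' : x ∈ closure (Submodule.span ℂ S : Set π.space) := hx
    exact map_mem_closure (π.op t).continuous hx' hspan
  -- Part 2 : ξ ∈ K
  have hxi : ξ ∈ cyclicSubspace μ π ξ := by
    show ξ ∈ closure (Submodule.span ℂ S : Set π.space)
    rw [Metric.mem_closure_iff]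
    intro ε hε
    have hcont := hπ.2 ξ
    have h1 : π.op (1 : G) ξ = ξ := by rw [HilbRep.op_one]; rfl
    have hev : ∀ᶠ s in nhds (1 : G), ‖π.op s ξ - ξ‖ < ε / 2 := by
      have htend : Filter.Tendsto (fun s : G => π.op s ξ) (nhds 1) (nhds ξ) := by
        have := hcont.continuousAt (x := (1 : G))
        rwa [ContinuousAt, h1] at this
      have := htend (Metric.ball_mem_nhds ξ (by positivity : (0:ℝ) < ε / 2))
      filter_upwards [this] with s hs
      simpa [dist_eq_norm] using hs
    obtain ⟨U, hUsub, hUopen, hU1⟩ := eventually_nhds_iff.1 hev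
    obtain ⟨K0, hK0comp, hK0nhds⟩ := exists_compact_mem_nhds (1 : G)
    set C : Set G := closure K0 with hC
    have hCcomp : IsCompact C := hK0comp.closure
    have hCmeas : MeasurableSet C := isClosed_closure.measurableSet
    set V : Set G := interior K0 ∩ U with hV
    have hVopen : IsOpen V := isOpen_interior.inter hUopen
    have hV1 : (1 : G) ∈ V := ⟨mem_interior_iff_mem_nhds.2 hK0nhds, hU1⟩
    have hVC : V ⊆ C := fun s hs => subset_closure (interior_subset hs.1)
    have hVmeas : MeasurableSet V := hVopen.measurableSet
    have hVpos : 0 < μ V := hVopen.measure_pos μ ⟨1, hV1⟩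
    have hVfin : μ V < ∞ := lt_of_le_of_lt (measure_mono hVC) hCcomp.measure_lt_top
    have hsmV : AEStronglyMeasurable (fun s => π.op s ξ) (μ.restrict V) :=
      (hcont.continuousOn.aestronglyMeasurable_of_isCompact hCcomp hCmeas).mono_measure
        (Measure.restrict_mono hVC le_rfl)
    set m : ℝ := (μ V).toReal with hm
    have hmpos : 0 < m := ENNReal.toReal_pos hVpos.ne' hVfin.ne
    set c0 : ℂ := ((m⁻¹ : ℝ) : ℂ) with hc0
    set f : G → ℂ := V.indicator (fun _ => c0) with hf
    have hfint : Integrable f μ := by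
      rw [hf, integrable_indicator_iff hVmeas]
      exact integrableOn_const hVfin.ne
    set x : π.space := ∫ s, f s • π.op s ξ ∂μ with hx
    refine ⟨x, Submodule.subset_span ⟨f, hfint, hx⟩, ?_⟩
    have hxeq : x = ∫ s in V, c0 • π.op s ξ ∂μ := by
      rw [hx, ← integral_indicator hVmeas]
      congr 1
      funext s
      rw [hf, Set.indicator_apply, Set.indicator_apply]
      by_cases hs : s ∈ V <;> simp [hs]
    -- integrability on V
    have hrepint : IntegrableOn (fun s => π.op s ξ) V μ := by
      refine Integrable.mono' (integrableOn_const hVfin.ne :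
        IntegrableOn (fun _ : G => c * ‖ξ‖) V μ) hsmV ?_
      filter_upwards with s
      calc ‖π.op s ξ‖ ≤ ‖π.op s‖ * ‖ξ‖ := (π.op s).le_opNorm ξ
        _ ≤ c * ‖ξ‖ := mul_le_mul_of_nonneg_right (hπ.1 s) (norm_nonneg ξ)
    have hconstint : IntegrableOn (fun _ : G => ξ) V μ :=
      integrableOn_const hVfin.ne
    have hdiff : ξ - x = c0 • ∫ s in V, (ξ - π.op s ξ) ∂μ := by
      rw [integral_sub hconstint hrepint, smul_sub, hxeq, integral_smul,
        setIntegral_const]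
      congr 1
      rw [hc0, Complex.coe_smul, smul_smul]
      rw [show μ.real V = m from rfl, inv_mul_cancel₀ hmpos.ne', one_smul]
    have hbound : ‖∫ s in V, (ξ - π.op s ξ) ∂μ‖ ≤ (ε / 2) * m := by
      refine norm_setIntegral_le_of_norm_le_const_ae' hVfin ?_
      filter_upwards with s hs
      have : ‖π.op s ξ - ξ‖ < ε / 2 := hUsub s hs.2
      rw [norm_sub_rev] at this
      exact this.le
    rw [dist_eq_norm, hdiff, norm_smul]
    have hnc0 : ‖c0‖ = m⁻¹ := by
      rw [hc0, Complex.norm_real, Real.norm_eq_abs, abs_of_pos (inv_pos.2 hmpos)]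
    calc ‖c0‖ * ‖∫ s in V, (ξ - π.op s ξ) ∂μ‖
        ≤ m⁻¹ * ((ε / 2) * m) := by
          rw [hnc0]
          exact mul_le_mul_of_nonneg_left hbound (inv_nonneg.2 hmpos.le)
      _ = ε / 2 := by
          rw [mul_comm (ε / 2) m, ← mul_assoc, inv_mul_cancel₀ hmpos.ne', one_mul]
      _ < ε := by linarith
  refine ⟨hinv, hxi, ?_, ?_⟩
  · intro t
    have hmem : π.op t ξ ∈ cyclicSubspace μ π ξ := hinv t ξ hxi
    have h0 : (inner ℂ (η - (((cyclicSubspace μ π ξ).orthogonalProjectionOnto η :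
        cyclicSubspace μ π ξ) : π.space)) (π.op t ξ) : ℂ) = 0 :=
      (cyclicSubspace μ π ξ).starProjection_inner_eq_zero η _ hmem
    have h1 := congrArg (starRingEnd ℂ) h0
    rw [inner_conj_symm, inner_sub_right, map_zero, sub_eq_zero] at h1
    exact h1
  · calc ‖(((cyclicSubspace μ π ξ).orthogonalProjectionOnto η : cyclicSubspace μ π ξ) : π.space)‖
        = ‖(cyclicSubspace μ π ξ).orthogonalProjectionOnto η‖ := rfl
      _ ≤ ‖(cyclicSubspace μ π ξ).orthogonalProjectionOnto‖ * ‖η‖ :=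
          ((cyclicSubspace μ π ξ).orthogonalProjectionOnto).le_opNorm η
      _ ≤ 1 * ‖η‖ :=
          mul_le_mul_of_nonneg_right (Submodule.orthogonalProjectionOnto_norm_le _) (norm_nonneg η)
      _ = ‖η‖ := one_mul _
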